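/- Let k ≥ 1, a ≥ 1, b ≥ 0 and c ≥ 1 be integers. Then the smallest period P_{k,φ} of g_{k,φ} equals the least common multiple, taken over all primes p ≤ c·L_k, of the smallest periods P_{p,k,φ} of the functions g_{p,k,φ}. -/

import Mathlib

/-- `L k = lcm (1, 2, …, k)`. -/
def Lk (k : ℕ) : ℕ := (Finset.Icc 1 k).lcm id

/-- `g_{k,φ} (n) = (∏_{i=0}^{k} φ (b + a (n + i c))) / φ (lcm_{0 ≤ i ≤ k} (b + a (n + i c)))`. -/
def gkphi (k a b c n : ℕ) : ℚ :=
  (∏ i ∈ Finset.range (k + 1), ((b + a * (n + i * c)).totient : ℚ)) /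
    (((Finset.range (k + 1)).lcm fun i => b + a * (n + i * c)).totient : ℚ)


open Finset

lemma finsetLcm_ne_zero {ι : Type*} [DecidableEq ι] (s : Finset ι) (f : ι → ℕ) (h : ∀ i ∈ s, f i ≠ 0) :
    s.lcm f ≠ 0 := by
  induction s using Finset.induction_on with
  | empty => simp
  | @insert a s ha ih =>
    rw [Finset.lcm_insert, lcm_eq_nat_lcm]
    exact Nat.lcm_ne_zero (h a (mem_insert_self a s))
      (ih fun i hi => h i (mem_insert_of_mem hi))

lemma finsetLcm_factorization {ι : Type*} [DecidableEq ι] (s : Finset ι) (f : ι → ℕ) (h : ∀ i ∈ s, f i ≠ 0)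
    (p : ℕ) : (s.lcm f).factorization p = s.sup fun i => (f i).factorization p := by
  induction s using Finset.induction_on with
  | empty => simp
  | @insert a s ha ih =>
    rw [Finset.lcm_insert, lcm_eq_nat_lcm,
      Nat.factorization_lcm (h a (mem_insert_self a s))
        (finsetLcm_ne_zero s f fun i hi => h i (mem_insert_of_mem hi)),
      Finsupp.sup_apply, Finset.sup_insert, ih fun i hi => h i (mem_insert_of_mem hi)]

lemma totient_factorization {p : ℕ} (hp : p.Prime) {m : ℕ} (hm : m ≠ 0) :
    (Nat.totient m).factorization p
      = (∑ q ∈ m.primeFactors, (q - 1).factorization p) + (m.factorization p - 1) := by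
  rw [Nat.totient_eq_prod_factorization hm, Finsupp.prod]
  have hne : ∀ q ∈ m.factorization.support, q ^ (m.factorization q - 1) * (q - 1) ≠ 0 := by
    intro q hq
    have hq2 : 2 ≤ q := (Nat.prime_of_mem_primeFactors (by simpa using hq)).two_le
    exact Nat.mul_ne_zero (pow_ne_zero _ (by omega)) (by omega)
  rw [Nat.factorization_prod hne, Finsupp.finset_sum_apply]
  have hterm : ∀ q ∈ m.factorization.support,
      (q ^ (m.factorization q - 1) * (q - 1)).factorization p
        = (if q = p then m.factorization q - 1 else 0) + (q - 1).factorization p := by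
    intro q hq
    have hqp : q.Prime := Nat.prime_of_mem_primeFactors (by simpa using hq)
    rw [Nat.factorization_mul (pow_ne_zero _ (by have := hqp.two_le; omega))
      (by have := hqp.two_le; omega), Finsupp.add_apply, Nat.factorization_pow,
      Finsupp.smul_apply, hqp.factorization, Finsupp.single_apply]
    simp [mul_ite]
  rw [Finset.sum_congr rfl hterm, Finset.sum_add_distrib, add_comm]
  congr 1
  rw [Finset.sum_ite_eq' _ p fun q => m.factorization q - 1]
  by_cases hpm : p ∈ m.factorization.support
  · rw [if_pos hpm]
  · rw [if_neg hpm]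
    have : m.factorization p = 0 := Finsupp.notMem_support_iff.mp hpm
    omega

lemma Lk_ne_zero (k : ℕ) : Lk k ≠ 0 := by
  apply finsetLcm_ne_zero
  intro i hi
  have := (Finset.mem_Icc.mp hi).1
  simp only [id]
  omega

lemma le_Lk {k : ℕ} (hk : 1 ≤ k) : k ≤ Lk k :=
  Nat.le_of_dvd (Nat.pos_of_ne_zero (Lk_ne_zero k))
    (Finset.dvd_lcm (Finset.mem_Icc.mpr ⟨hk, le_rfl⟩))

lemma sum_pred_eq {k γ : ℕ} (f : ℕ → ℕ) (hγ : ∀ i ∈ Finset.range (k+1), γ ≤ f i)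
    (huniq : ∀ i ∈ Finset.range (k+1), ∀ j ∈ Finset.range (k+1), i ≠ j →
      γ < f i → γ < f j → False) :
    ∑ i ∈ Finset.range (k+1), (f i - 1)
      = ((Finset.range (k+1)).sup f - 1) + k * (γ - 1) := by
  obtain ⟨i0, hi0, hsup⟩ := Finset.exists_mem_eq_sup (Finset.range (k+1))
    ⟨0, Finset.mem_range.mpr (Nat.succ_pos k)⟩ f
  rw [← Finset.add_sum_erase _ _ hi0]
  have hall : ∀ i ∈ (Finset.range (k+1)).erase i0, f i - 1 = γ - 1 := by
    intro i hi
    obtain ⟨hne, him⟩ := Finset.mem_erase.mp hi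
    have h1 : γ ≤ f i := hγ i him
    rcases eq_or_lt_of_le h1 with h | h
    · rw [← h]
    · exact absurd (huniq i him i0 hi0 hne h
        (lt_of_lt_of_le h (hsup ▸ Finset.le_sup him))) (by simp)
  rw [Finset.sum_congr rfl hall, Finset.sum_const, Finset.card_erase_of_mem hi0,
    Finset.card_range, ← hsup, smul_eq_mul]
  simp [Nat.add_sub_cancel]

lemma key_fact (k a b c n p : ℕ) (hk : 1 ≤ k) (ha : 1 ≤ a) (hc : 1 ≤ c) (hn : 1 ≤ n)
    (hp : p.Prime) (hlarge : c * Lk k < p) :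
    (∏ i ∈ Finset.range (k+1), (b + a * (n + i * c)).totient).factorization p
      = ((Finset.range (k+1)).lcm fun i => b + a * (n + i * c)).totient.factorization p
        + k * (Nat.gcd a b).totient.factorization p := by
  classical
  have hm : ∀ i : ℕ, b + a * (n + i * c) ≠ 0 := by
    intro i
    have := Nat.mul_pos (show 0 < a by omega) (show 0 < n + i * c by omega)
    omega
  set m : ℕ → ℕ := fun i => b + a * (n + i * c) with hm_def
  set d : ℕ := (Finset.range (k+1)).lcm m with hd_def
  have hd : d ≠ 0 := finsetLcm_ne_zero _ _ fun i _ => hm i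
  set G : ℕ := Nat.gcd a b with hG_def
  have hG : G ≠ 0 := by
    intro h
    rw [hG_def, Nat.gcd_eq_zero_iff] at h
    omega
  have hGm : ∀ i, G ∣ m i :=
    fun i => Nat.dvd_add (Nat.gcd_dvd_right a b) ((Nat.gcd_dvd_left a b).mul_right _)
  have hmd : ∀ i ∈ Finset.range (k+1), m i ∣ d := fun i hi => Finset.dvd_lcm hi
  have hGd : G ∣ d := (hGm 0).trans (hmd 0 (by simp))
  -- difference fact
  have hdiff : ∀ i j : ℕ, i < j → ∀ D : ℕ, D ∣ m i → D ∣ m j → D ∣ a * (c * (j - i)) := by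
    intro i j hij D h1 h2
    obtain ⟨t, rfl⟩ : ∃ t, j = i + t := ⟨j - i, by omega⟩
    have heq : m (i + t) = m i + a * (c * t) := by simp only [hm_def]; ring
    have : D ∣ a * (c * t) := (Nat.dvd_add_right h1).mp (heq ▸ h2)
    have ht : i + t - i = t := by omega
    rwa [ht]
  -- the inner factor is positive and small
  have hsmall : ∀ i j : ℕ, i < j → j ≤ k → 1 ≤ c * (j - i) ∧ c * (j - i) ≤ c * Lk k := by
    intro i j hij hjk
    constructor
    · exact Nat.mul_pos (by omega) (by omega)
    · exact Nat.mul_le_mul_left c (le_trans (by omega) (le_Lk hk))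
  -- a prime dividing two of the terms divides G
  have htwo : ∀ q, q.Prime → c * Lk k < q → ∀ i j, i < j → j ≤ k →
      q ∣ m i → q ∣ m j → q ∣ G := by
    intro q hq hlq i j hij hjk h1 h2
    have hdd := hdiff i j hij q h1 h2
    obtain ⟨hs1, hs2⟩ := hsmall i j hij hjk
    have hqa : q ∣ a := by
      rcases (Nat.Prime.dvd_mul hq).mp hdd with h | h
      · exact h
      · exact absurd (Nat.le_of_dvd (by omega) h) (by omega)
    have hqb : q ∣ b := (Nat.dvd_add_iff_left (hqa.mul_right _)).mpr h1
    exact Nat.dvd_gcd hqa hqb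
  set γ : ℕ := G.factorization p with hγ_def
  -- at most one term is divisible by p^(γ+1)
  have hC2 : ∀ i j, i < j → j ≤ k → p ^ (γ + 1) ∣ m i → p ^ (γ + 1) ∣ m j → False := by
    intro i j hij hjk h1 h2
    have hdd := hdiff i j hij _ h1 h2
    obtain ⟨hs1, hs2⟩ := hsmall i j hij hjk
    have hnd : ¬ p ∣ c * (j - i) := fun h => by
      have := Nat.le_of_dvd (by omega) h
      omega
    have hcop : (p ^ (γ + 1)).Coprime (c * (j - i)) :=
      Nat.Coprime.pow_left _ (hp.coprime_iff_not_dvd.mpr hnd)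
    have hpa : p ^ (γ + 1) ∣ a := hcop.dvd_of_dvd_mul_right hdd
    have hγa : γ + 1 ≤ a.factorization p :=
      (Nat.Prime.pow_dvd_iff_le_factorization hp (by omega)).mp hpa
    by_cases hb : b = 0
    · have : γ = a.factorization p := by rw [hγ_def, hG_def, hb, Nat.gcd_zero_right]
      omega
    · have hpb : p ^ (γ + 1) ∣ b := (Nat.dvd_add_iff_left (hpa.mul_right _)).mpr h1
      have hγb : γ + 1 ≤ b.factorization p :=
        (Nat.Prime.pow_dvd_iff_le_factorization hp hb).mp hpb
      have hγeq : γ = a.factorization p ⊓ b.factorization p := by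
        rw [hγ_def, hG_def, Nat.factorization_gcd (by omega) hb, Finsupp.inf_apply]
      have hle := le_inf hγa hγb
      rw [← hγeq] at hle
      omega
  set f : ℕ → ℕ := fun i => (m i).factorization p with hf_def
  have hfd : d.factorization p = (Finset.range (k+1)).sup f :=
    finsetLcm_factorization _ _ (fun i _ => hm i) p
  have hγf : ∀ i ∈ Finset.range (k+1), γ ≤ f i := by
    intro i _
    have h1 : p ^ γ ∣ m i := (Nat.ordProj_dvd G p).trans (hGm i)
    exact (Nat.Prime.pow_dvd_iff_le_factorization hp (hm i)).mp h1
  have huniq : ∀ i ∈ Finset.range (k+1), ∀ j ∈ Finset.range (k+1), i ≠ j →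
      γ < f i → γ < f j → False := by
    intro i hi j hj hne h1 h2
    have h1' : p ^ (γ + 1) ∣ m i :=
      (Nat.Prime.pow_dvd_iff_le_factorization hp (hm i)).mpr h1
    have h2' : p ^ (γ + 1) ∣ m j :=
      (Nat.Prime.pow_dvd_iff_le_factorization hp (hm j)).mpr h2
    rw [Finset.mem_range] at hi hj
    rcases Nat.lt_or_ge i j with h | h
    · exact hC2 i j h (by omega) h1' h2'
    · exact hC2 j i (by omega) (by omega) h2' h1'
  have hS : ∑ i ∈ Finset.range (k+1), (f i - 1)
      = (d.factorization p - 1) + k * (γ - 1) := by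
    rw [hfd]; exact sum_pred_eq f hγf huniq
  -- W part
  set w : ℕ → ℕ := fun q => (q - 1).factorization p with hw_def
  have hPfd : ∀ i ∈ Finset.range (k+1), (m i).primeFactors ⊆ d.primeFactors :=
    fun i hi => Nat.primeFactors_mono (hmd i hi) hd
  have hPfG : G.primeFactors ⊆ d.primeFactors := Nat.primeFactors_mono hGd hd
  have hWi : ∀ i ∈ Finset.range (k+1), ∑ q ∈ (m i).primeFactors, w q
      = ∑ q ∈ d.primeFactors, if q ∈ (m i).primeFactors then w q else 0 := by
    intro i hi
    rw [Finset.sum_ite_mem, Finset.inter_eq_right.mpr (hPfd i hi)]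
  have hterm : ∀ q ∈ d.primeFactors,
      (∑ i ∈ Finset.range (k+1), if q ∈ (m i).primeFactors then w q else 0)
        = w q + k * (if q ∈ G.primeFactors then w q else 0) := by
    intro q hq
    obtain ⟨hqp, hqd, _⟩ := Nat.mem_primeFactors.mp hq
    by_cases hw0 : w q = 0
    · simp [hw0]
    · have hpq1 : p ∣ q - 1 := by
        by_contra hnd
        exact hw0 (Nat.factorization_eq_zero_of_not_dvd hnd)
      have hq2 : 2 ≤ q := hqp.two_le
      have hq_large : c * Lk k < q := by
        have := Nat.le_of_dvd (by omega) hpq1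
        omega
      by_cases hqG : q ∣ G
      · have hall : ∀ i ∈ Finset.range (k+1), q ∈ (m i).primeFactors :=
          fun i _ => Nat.mem_primeFactors.mpr ⟨hqp, hqG.trans (hGm i), hm i⟩
        rw [Finset.sum_congr rfl fun i hi => if_pos (hall i hi), Finset.sum_const,
          Finset.card_range, if_pos (Nat.mem_primeFactors.mpr ⟨hqp, hqG, hG⟩), smul_eq_mul]
        ring
      · have hex : ∃ i ∈ Finset.range (k+1), q ∣ m i := by
          have h1 : 1 ≤ d.factorization q := (hqp.dvd_iff_one_le_factorization hd).mp hqd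
          rw [finsetLcm_factorization _ _ (fun i _ => hm i) q] at h1
          obtain ⟨i0, hi0, hsup⟩ := Finset.exists_mem_eq_sup (Finset.range (k+1))
            ⟨0, Finset.mem_range.mpr (Nat.succ_pos k)⟩ fun i => (m i).factorization q
          exact ⟨i0, hi0, (hqp.dvd_iff_one_le_factorization (hm i0)).mpr (hsup ▸ h1)⟩
        obtain ⟨i0, hi0, hqi0⟩ := hex
        have huq : ∀ i ∈ Finset.range (k+1), i ≠ i0 → ¬ q ∣ m i := by
          intro i hi hne hqi
          rw [Finset.mem_range] at hi hi0
          apply hqG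
          rcases Nat.lt_or_ge i i0 with h | h
          · exact htwo q hqp hq_large i i0 h (by omega) hqi hqi0
          · exact htwo q hqp hq_large i0 i (by omega) (by omega) hqi0 hqi
        rw [Finset.sum_eq_single i0 ?_ ?_]
        · rw [if_pos (Nat.mem_primeFactors.mpr ⟨hqp, hqi0, hm i0⟩),
            if_neg fun h => hqG (Nat.mem_primeFactors.mp h).2.1, mul_zero, add_zero]
        · intro i hi hne
          exact if_neg fun h => huq i hi hne (Nat.mem_primeFactors.mp h).2.1
        · intro h
          exact absurd hi0 h
  have hW : ∑ i ∈ Finset.range (k+1), ∑ q ∈ (m i).primeFactors, w q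
      = (∑ q ∈ d.primeFactors, w q) + k * ∑ q ∈ G.primeFactors, w q := by
    rw [Finset.sum_congr rfl hWi, Finset.sum_comm, Finset.sum_congr rfl hterm,
      Finset.sum_add_distrib, ← Finset.mul_sum]
    congr 2
    rw [Finset.sum_ite_mem, Finset.inter_eq_right.mpr hPfG]
  have hNfact : (∏ i ∈ Finset.range (k+1), Nat.totient (m i)).factorization p
      = ∑ i ∈ Finset.range (k+1), (Nat.totient (m i)).factorization p := by
    rw [Nat.factorization_prod fun i _ => (Nat.totient_pos.mpr (Nat.pos_of_ne_zero (hm i))).ne',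
      Finsupp.finset_sum_apply]
  rw [hNfact, Finset.sum_congr rfl fun i _ => totient_factorization hp (hm i),
    Finset.sum_add_distrib, hW, hS, totient_factorization hp hd, totient_factorization hp hG]
  ring

lemma term_ne_zero {a b c n : ℕ} (ha : 1 ≤ a) (hn : 1 ≤ n) (i : ℕ) :
    b + a * (n + i * c) ≠ 0 := by
  have := Nat.mul_pos (show 0 < a by omega) (show 0 < n + i * c by omega)
  omega

lemma num_ne_zero {k a b c n : ℕ} (ha : 1 ≤ a) (hn : 1 ≤ n) :
    (∏ i ∈ Finset.range (k+1), (b + a * (n + i * c)).totient) ≠ 0 := by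
  apply Finset.prod_ne_zero_iff.mpr
  intro i _
  exact (Nat.totient_pos.mpr (Nat.pos_of_ne_zero (term_ne_zero ha hn i))).ne'

lemma den_ne_zero {k a b c n : ℕ} (ha : 1 ≤ a) (hn : 1 ≤ n) :
    ((Finset.range (k+1)).lcm fun i => b + a * (n + i * c)).totient ≠ 0 :=
  (Nat.totient_pos.mpr
    (Nat.pos_of_ne_zero (finsetLcm_ne_zero _ _ fun i _ => term_ne_zero ha hn i))).ne'

lemma gkphi_eq_div (k a b c n : ℕ) :
    gkphi k a b c n
      = ((∏ i ∈ Finset.range (k+1), (b + a * (n + i * c)).totient : ℕ) : ℚ) /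
        ((((Finset.range (k+1)).lcm fun i => b + a * (n + i * c)).totient : ℕ) : ℚ) := by
  unfold gkphi
  rw [Nat.cast_prod]

lemma gkphi_val {k a b c n : ℕ} (ha : 1 ≤ a) (hn : 1 ≤ n) {p : ℕ} (hp : p.Prime) :
    padicValRat p (gkphi k a b c n)
      = ((∏ i ∈ Finset.range (k+1), (b + a * (n + i * c)).totient).factorization p : ℤ)
        - (((Finset.range (k+1)).lcm fun i => b + a * (n + i * c)).totient.factorization p : ℤ) := by
  haveI := Fact.mk hp
  rw [gkphi_eq_div, padicValRat.div (by exact_mod_cast num_ne_zero ha hn)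
    (by exact_mod_cast den_ne_zero ha hn), padicValRat.of_nat, padicValRat.of_nat,
    ← Nat.factorization_def _ hp, ← Nat.factorization_def _ hp]

lemma key_constancy (k a b c n p : ℕ) (hk : 1 ≤ k) (ha : 1 ≤ a) (hc : 1 ≤ c) (hn : 1 ≤ n)
    (hp : p.Prime) (hlarge : c * Lk k < p) :
    padicValRat p (gkphi k a b c n)
      = (k * (Nat.gcd a b).totient.factorization p : ℤ) := by
  rw [gkphi_val ha hn hp, key_fact k a b c n p hk ha hc hn hp hlarge]
  push_cast
  ring

lemma g_eq_of_val_eq (k a b c : ℕ) (ha : 1 ≤ a) (n n' : ℕ) (hn : 1 ≤ n) (hn' : 1 ≤ n')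
    (h : ∀ p : ℕ, p.Prime →
      padicValRat p (gkphi k a b c n) = padicValRat p (gkphi k a b c n')) :
    gkphi k a b c n = gkphi k a b c n' := by
  have key : (∏ i ∈ Finset.range (k+1), (b + a * (n + i * c)).totient) *
      ((Finset.range (k+1)).lcm fun i => b + a * (n' + i * c)).totient
    = (∏ i ∈ Finset.range (k+1), (b + a * (n' + i * c)).totient) *
      ((Finset.range (k+1)).lcm fun i => b + a * (n + i * c)).totient := by
    rw [Nat.eq_iff_prime_padicValNat_eq _ _
      (Nat.mul_ne_zero (num_ne_zero ha hn) (den_ne_zero ha hn'))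
      (Nat.mul_ne_zero (num_ne_zero ha hn') (den_ne_zero ha hn))]
    intro q hq
    haveI := Fact.mk hq
    rw [padicValNat.mul (num_ne_zero ha hn) (den_ne_zero ha hn'),
      padicValNat.mul (num_ne_zero ha hn') (den_ne_zero ha hn)]
    have hv := h q hq
    rw [gkphi_val ha hn hq, gkphi_val ha hn' hq] at hv
    rw [Nat.factorization_def _ hq, Nat.factorization_def _ hq,
      Nat.factorization_def _ hq, Nat.factorization_def _ hq] at hv
    omega
  rw [gkphi_eq_div, gkphi_eq_div, div_eq_div_iff
    (by exact_mod_cast den_ne_zero ha hn) (by exact_mod_cast den_ne_zero ha hn')]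
  exact_mod_cast key

lemma period_mul {α : Type*} (F : ℕ → α) (T : ℕ) (hT : ∀ n, 0 < n → F (n + T) = F n) :
    ∀ q n, 0 < n → F (n + q * T) = F n := by
  intro q
  induction q with
  | zero => simp
  | succ q ih =>
    intro n hn
    have h1 : n + (q + 1) * T = (n + q * T) + T := by ring
    rw [h1, hT _ (by omega), ih n hn]

lemma least_period_dvd {α : Type*} (F : ℕ → α) (P T : ℕ)
    (hP : IsLeast {T : ℕ | 0 < T ∧ ∀ n : ℕ, 0 < n → F (n + T) = F n} P)
    (hT : ∀ n, 0 < n → F (n + T) = F n) : P ∣ T := by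
  obtain ⟨⟨hP0, hPper⟩, hmin⟩ := hP
  rcases Nat.eq_zero_or_pos (T % P) with h | h
  · exact Nat.dvd_of_mod_eq_zero h
  · exfalso
    have hper : ∀ n, 0 < n → F (n + T % P) = F n := by
      intro n hn
      have h1 : F (n + T % P + T / P * P) = F (n + T % P) :=
        period_mul F P hPper (T / P) _ (by omega)
      have h2 : n + T % P + T / P * P = n + T := by
        rw [add_assoc, Nat.mod_add_div']
      rw [h2, hT n hn] at h1
      exact h1.symm
    have hle := hmin ⟨h, hper⟩
    have := Nat.mod_lt T hP0
    omega

/-- Lemma 3.3: the smallest period `P_{k,φ}` of `g_{k,φ}` equals the lcm, over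
all primes `p ≤ c L_k`, of the smallest periods `P_{p,k,φ}` of the functions
`g_{p,k,φ} (n) = v_p (g_{k,φ} (n))`. -/
theorem smallest_period_eq_lcm_of_local_periods (k a b c : ℕ)
    (hk : 1 ≤ k) (ha : 1 ≤ a) (hc : 1 ≤ c)
    (P : ℕ)
    (hP : IsLeast {T : ℕ | 0 < T ∧ ∀ n : ℕ, 0 < n →
      gkphi k a b c (n + T) = gkphi k a b c n} P)
    (Pp : ℕ → ℕ)
    (hPp : ∀ p : ℕ, p.Prime → p ≤ c * Lk k →
      IsLeast {T : ℕ | 0 < T ∧ ∀ n : ℕ, 0 < n →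
        padicValRat p (gkphi k a b c (n + T)) = padicValRat p (gkphi k a b c n)} (Pp p)) :
    P = ((Finset.range (c * Lk k + 1)).filter Nat.Prime).lcm Pp := by
  classical
  set F := (Finset.range (c * Lk k + 1)).filter Nat.Prime with hF_def
  set L := F.lcm Pp with hL_def
  have hmem : ∀ p ∈ F, p.Prime ∧ p ≤ c * Lk k := by
    intro p hp
    rw [hF_def, Finset.mem_filter, Finset.mem_range] at hp
    exact ⟨hp.2, by omega⟩
  have hP0 : 0 < P := hP.1.1
  have hPper := hP.1.2
  have hPpdvd : ∀ p ∈ F, Pp p ∣ P := by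
    intro p hp
    obtain ⟨hpp, hple⟩ := hmem p hp
    exact least_period_dvd (fun n => padicValRat p (gkphi k a b c n)) _ _
      (hPp p hpp hple) (fun n hn => by simp only [hPper n hn])
  have hLP : L ∣ P := Finset.lcm_dvd hPpdvd
  have hL0 : 0 < L := by
    rcases Nat.eq_zero_or_pos L with h | h
    · exfalso
      rw [hL_def, Finset.lcm_eq_zero_iff] at h
      obtain ⟨p, hp, hp0⟩ := h
      obtain ⟨hpp, hple⟩ := hmem p hp
      have := (hPp p hpp hple).1.1
      omega
    · exact h
  have hLper : ∀ n : ℕ, 0 < n → gkphi k a b c (n + L) = gkphi k a b c n := by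
    intro n hn
    apply g_eq_of_val_eq k a b c ha _ _ (by omega) hn
    intro p hpp
    by_cases hple : p ≤ c * Lk k
    · have hpF : p ∈ F := by
        rw [hF_def, Finset.mem_filter, Finset.mem_range]
        exact ⟨by omega, hpp⟩
      obtain ⟨t, ht⟩ := Finset.dvd_lcm (f := Pp) hpF
      have hper := (hPp p hpp hple).1.2
      have hmul := period_mul (fun n => padicValRat p (gkphi k a b c n)) (Pp p) hper t n hn
      have harg : n + L = n + t * Pp p := by rw [hL_def, ht, mul_comm]
      rw [harg]
      exact hmul
    · push_neg at hple
      rw [key_constancy k a b c (n + L) p hk ha hc (by omega) hpp hple,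
        key_constancy k a b c n p hk ha hc (by omega) hpp hple]
  have hPL : P ≤ L := hP.2 ⟨hL0, hLper⟩
  have hLleP := Nat.le_of_dvd hP0 hLP
  omega
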